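/- Let η > 0 and a, m, c, a', m', c' ∈ ℝ. Set N = a − c, D = a − 2m + c, N' = a' − c', D' = a' − 2m' + c'. Suppose |a − a'| ≤ ε, |m − m'| ≤ ε, |c − c'| ≤ ε, and |D| ≥ δ > 4ε. Then the perturbed learning-rate estimate satisfies |(η/2)·N'/D' − (η/2)·N/D| ≤ (η/2)·(2ε + 4ε|N|/δ)/(δ − 4ε). -/

import Mathlib

/-- Deterministic stability of the learning-rate estimate
`η* = (η/2)·N/D` under perturbations of the three loss values by at most
`ε`, provided the denominator is bounded below by `δ > 4ε`. -/
theorem lr_estimate_stability (η a m c a' m' c' ε δ : ℝ) (hη : 0 < η)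
    (ha : |a - a'| ≤ ε) (hm : |m - m'| ≤ ε) (hc : |c - c'| ≤ ε)
    (hD : δ ≤ |a - 2 * m + c|) (hδ : 4 * ε < δ) :
    |η / 2 * ((a' - c') / (a' - 2 * m' + c'))
      - η / 2 * ((a - c) / (a - 2 * m + c))|
      ≤ η / 2 * ((2 * ε + 4 * ε * |a - c| / δ) / (δ - 4 * ε)) := by
  have hε : 0 ≤ ε := le_trans (abs_nonneg _) ha
  set N := a - c
  set D := a - 2 * m + c
  set N' := a' - c'
  set D' := a' - 2 * m' + c'
  have hδ0 : 0 < δ := lt_of_le_of_lt (by linarith) hδ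
  have hNN' : |N' - N| ≤ 2 * ε := by
    have : N' - N = (c - c') - (a - a') := by ring
    rw [this]
    calc |(c - c') - (a - a')| ≤ |c - c'| + |a - a'| := abs_sub _ _
      _ ≤ ε + ε := add_le_add hc ha
      _ = 2 * ε := by ring
  have hDD' : |D - D'| ≤ 4 * ε := by
    have : D - D' = (a - a') - 2 * (m - m') + (c - c') := by ring
    rw [this]
    calc |(a - a') - 2 * (m - m') + (c - c')|
        ≤ |(a - a') - 2 * (m - m')| + |c - c'| := abs_add_le _ _
      _ ≤ (|a - a'| + |2 * (m - m')|) + |c - c'| := by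
          exact add_le_add (abs_sub _ _) le_rfl
      _ ≤ (ε + 2 * ε) + ε := by
          have : |2 * (m - m')| = 2 * |m - m'| := by
            rw [abs_mul]; norm_num
          rw [this]; gcongr
      _ = 4 * ε := by ring
  have hD'lb : δ - 4 * ε ≤ |D'| := by
    have := abs_sub_abs_le_abs_sub D D'
    linarith [hD]
  have hD'pos : 0 < |D'| := lt_of_lt_of_le (by linarith) hD'lb
  have hDpos : 0 < |D| := lt_of_lt_of_le hδ0 hD
  have hDne : D ≠ 0 := abs_pos.mp hDpos
  have hD'ne : D' ≠ 0 := abs_pos.mp hD'pos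
  have key : N' / D' - N / D = (N' - N) / D' + N * (D - D') / (D * D') := by
    field_simp
    ring
  have hbound : |N' / D' - N / D| ≤ (2 * ε + 4 * ε * |N| / δ) / (δ - 4 * ε) := by
    rw [key]
    have h1 : |(N' - N) / D'| ≤ 2 * ε / (δ - 4 * ε) := by
      rw [abs_div]
      exact div_le_div₀ (by linarith) hNN' (by linarith) hD'lb
    have h2 : |N * (D - D') / (D * D')| ≤ 4 * ε * |N| / δ / (δ - 4 * ε) := by
      rw [abs_div, abs_mul, abs_mul]
      rw [div_div]
      apply div_le_div₀ (mul_nonneg (by linarith) (abs_nonneg N)) _ (mul_pos hδ0 (by linarith)) _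
      · calc |N| * |D - D'| ≤ |N| * (4 * ε) := by gcongr
          _ = 4 * ε * |N| := by ring
      · calc δ * (δ - 4 * ε) ≤ |D| * (δ - 4 * ε) := by gcongr
          _ ≤ |D| * |D'| := by gcongr
    calc |(N' - N) / D' + N * (D - D') / (D * D')|
        ≤ |(N' - N) / D'| + |N * (D - D') / (D * D')| := abs_add_le _ _
      _ ≤ 2 * ε / (δ - 4 * ε) + 4 * ε * |N| / δ / (δ - 4 * ε) := add_le_add h1 h2
      _ = (2 * ε + 4 * ε * |N| / δ) / (δ - 4 * ε) := by ring
  have : η / 2 * (N' / D') - η / 2 * (N / D) = η / 2 * (N' / D' - N / D) := by ring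
  rw [this, abs_mul, abs_of_pos (by linarith : (0:ℝ) < η / 2)]
  exact mul_le_mul_of_nonneg_left hbound (by linarith)
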